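/- Let Y, r, k be reals with k real, g > 0, δ_T > 0, δ_G ≥ 0, and set δ = b·δ_T - δ_G (0 < b < 1, e > 0, f > 0). Consider the zero-sum angel-daemon game with actions {T, G} for each player and payoff (to the angel) u(T,T) = u(G,G) = Y - k·r, u(T,G) = (Y - k·r) + (1/g)(f - k·e)·δ, u(G,T) = (Y - k·r) - (1/g)(f - k·e)·δ, where the angel maximizes u and the daemon maximizes -u. Then: (i) if (f - k·e)·δ = 0, all four strategy profiles are pure Nash equilibria; (ii) if (f - k·e)·δ > 0, the profile (T, T) is the unique pure Nash equilibrium; (iii) if (f - k·e)·δ < 0, the profile (G, G) is the unique pure Nash equilibrium. -/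
import Mathlib


/-- Actions in the zero-sum fiscal-policy angel-daemon game: perturb taxes T or
government spending G. -/
inductive FiscalAct : Type
  | T : FiscalAct
  | G : FiscalAct

/-- Payoff (to the angel) of the zero-sum fiscal-policy game; the first action
is the angel's and the second the daemon's. -/
noncomputable def zsFiscalU (Y r k e f g δ : ℝ) : FiscalAct → FiscalAct → ℝ
  | FiscalAct.T, FiscalAct.T => Y - k * r
  | FiscalAct.T, FiscalAct.G => (Y - k * r) + (1 / g) * (f - k * e) * δ
  | FiscalAct.G, FiscalAct.T => (Y - k * r) - (1 / g) * (f - k * e) * δ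
  | FiscalAct.G, FiscalAct.G => Y - k * r

/-- (a, d) is a pure Nash equilibrium of the zero-sum game with payoff u to the
angel: the angel cannot increase u and the daemon cannot increase -u. -/
def IsPNEzs {α β : Type*} (u : α → β → ℝ) (a : α) (d : β) : Prop :=
  (∀ a' : α, u a' d ≤ u a d) ∧ (∀ d' : β, -u a d' ≤ -u a d)

/-- structure of the pure Nash equilibria of the zero-sum
fiscal-policy angel-daemon game, according to the sign of (f - k·e)·δ where
δ = b·δ_T - δ_G. -/
theorem zero_sum_fiscal_PNE
    (Y r k b e f g δT δG : ℝ)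
    (hb0 : 0 < b) (hb1 : b < 1) (he : 0 < e) (hf : 0 < f) (hg : 0 < g)
    (hδT : 0 < δT) (hδG : 0 ≤ δG)
    (δ : ℝ) (hδ : δ = b * δT - δG) :
    let u := zsFiscalU Y r k e f g δ
    ((f - k * e) * δ = 0 → ∀ a d : FiscalAct, IsPNEzs u a d) ∧
    (0 < (f - k * e) * δ →
      ∀ a d : FiscalAct, IsPNEzs u a d ↔ (a = FiscalAct.T ∧ d = FiscalAct.T)) ∧
    ((f - k * e) * δ < 0 →
      ∀ a d : FiscalAct, IsPNEzs u a d ↔ (a = FiscalAct.G ∧ d = FiscalAct.G)) := by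
  intro u
  set c : ℝ := 1 / g * (f - k * e) * δ with hc
  have hcassoc : c = 1 / g * ((f - k * e) * δ) := by rw [hc, mul_assoc]
  have hgpos : (0:ℝ) < 1 / g := by positivity
  have uTT : u FiscalAct.T FiscalAct.T = Y - k * r := rfl
  have uTG : u FiscalAct.T FiscalAct.G = Y - k * r + c := rfl
  have uGT : u FiscalAct.G FiscalAct.T = Y - k * r - c := rfl
  have uGG : u FiscalAct.G FiscalAct.G = Y - k * r := rfl
  refine ⟨?_, ?_, ?_⟩
  · intro h a d
    have h0 : c = 0 := by rw [hcassoc, h, mul_zero]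
    cases a <;> cases d <;>
      exact ⟨fun a' => by cases a' <;>
               simp only [uTT, uTG, uGT, uGG] <;> linarith,
             fun d' => by cases d' <;>
               simp only [uTT, uTG, uGT, uGG] <;> linarith⟩
  · intro h a d
    have h0 : 0 < c := by rw [hcassoc]; exact mul_pos hgpos h
    cases a <;> cases d
    · exact ⟨fun _ => ⟨rfl, rfl⟩,
        fun _ => ⟨fun a' => by cases a' <;>
                    simp only [uTT, uTG, uGT, uGG] <;> linarith,
                  fun d' => by cases d' <;>
                    simp only [uTT, uTG, uGT, uGG] <;> linarith⟩⟩
    · constructor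
      · rintro ⟨h1, h2⟩
        exfalso
        have := h2 FiscalAct.T
        rw [uTT, uTG] at this
        linarith
      · rintro ⟨_, h2⟩; exact absurd h2 (by simp)
    · constructor
      · rintro ⟨h1, h2⟩
        exfalso
        have := h1 FiscalAct.T
        rw [uTT, uGT] at this
        linarith
      · rintro ⟨h1, _⟩; exact absurd h1 (by simp)
    · constructor
      · rintro ⟨h1, h2⟩
        exfalso
        have := h1 FiscalAct.T
        rw [uTG, uGG] at this
        linarith
      · rintro ⟨h1, _⟩; exact absurd h1 (by simp)
  · intro h a d
    have h0 : c < 0 := by rw [hcassoc]; exact mul_neg_of_pos_of_neg hgpos h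
    cases a <;> cases d
    · constructor
      · rintro ⟨h1, h2⟩
        exfalso
        have := h1 FiscalAct.G
        rw [uTT, uGT] at this
        linarith
      · rintro ⟨h1, _⟩; exact absurd h1 (by simp)
    · constructor
      · rintro ⟨h1, h2⟩
        exfalso
        have := h1 FiscalAct.G
        rw [uTG, uGG] at this
        linarith
      · rintro ⟨h1, _⟩; exact absurd h1 (by simp)
    · constructor
      · rintro ⟨h1, h2⟩
        exfalso
        have := h2 FiscalAct.G
        rw [uGT, uGG] at this
        linarith
      · rintro ⟨_, h2⟩; exact absurd h2 (by simp)
    · exact ⟨fun _ => ⟨rfl, rfl⟩,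
        fun _ => ⟨fun a' => by cases a' <;>
                    simp only [uTT, uTG, uGT, uGG] <;> linarith,
                  fun d' => by cases d' <;>
                    simp only [uTT, uTG, uGT, uGG] <;> linarith⟩⟩
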